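/- In dimension five (n = 4), the functions ψ(x) = a√x and ω(x) = 1/x - 6/a², for any constant a > 0, give an explicit solution on (0, +∞) of the steady soliton ODE system: 4ψ'' - ψω' = 0 and ψψ'' + 3(ψ')² - 3 - ψψ'ω = 0. -/

import Mathlib

lemma sqrt_deriv1 (a : ℝ) {x : ℝ} (hx : 0 < x) :
    HasDerivAt (fun x => a * Real.sqrt x) (a / (2 * Real.sqrt x)) x := by
  have h := (Real.hasDerivAt_sqrt (ne_of_gt hx)).const_mul a
  simpa [div_eq_mul_inv, mul_comm, mul_assoc] using h

lemma deriv1_eq (a : ℝ) {x : ℝ} (hx : 0 < x) :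
    deriv (fun x => a * Real.sqrt x) x = a / (2 * Real.sqrt x) :=
  (sqrt_deriv1 a hx).deriv

lemma deriv2_eq (a : ℝ) {x : ℝ} (hx : 0 < x) :
    deriv (deriv (fun x => a * Real.sqrt x)) x = -a / (4 * x * Real.sqrt x) := by
  have hev : deriv (fun x => a * Real.sqrt x) =ᶠ[nhds x] fun y => a / (2 * Real.sqrt y) := by
    filter_upwards [eventually_gt_nhds hx] with y hy using deriv1_eq a hy
  rw [hev.deriv_eq]
  have hs : Real.sqrt x ≠ 0 := ne_of_gt (Real.sqrt_pos.mpr hx)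
  have h2 : (2 * Real.sqrt x) ≠ 0 := by positivity
  have hd : HasDerivAt (fun y => 2 * Real.sqrt y) (2 * (1 / (2 * Real.sqrt x))) x :=
    (Real.hasDerivAt_sqrt (ne_of_gt hx)).const_mul 2
  have hinv : HasDerivAt (fun y => a / (2 * Real.sqrt y)) _ x := (hasDerivAt_const x a).div hd h2
  rw [hinv.deriv]
  have hxx : Real.sqrt x * Real.sqrt x = x := Real.mul_self_sqrt hx.le
  set s := Real.sqrt x with hsdef
  have hx2 : x = s ^ 2 := by rw [sq, hxx]
  have hx0 : x ≠ 0 := ne_of_gt hx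
  rw [hx2] at hx0 ⊢
  field_simp
  ring

theorem explicit_steady_soliton_dim_five (a : ℝ) (ha : 0 < a) :
    ∀ x > (0 : ℝ),
      4 * deriv (deriv (fun x => a * Real.sqrt x)) x
          - (a * Real.sqrt x) * deriv (fun x => 1 / x - 6 / a ^ 2) x = 0 ∧
      (a * Real.sqrt x) * deriv (deriv (fun x => a * Real.sqrt x)) x
          + 3 * (deriv (fun x => a * Real.sqrt x) x) ^ 2 - 3
          - (a * Real.sqrt x) * deriv (fun x => a * Real.sqrt x) x
              * (1 / x - 6 / a ^ 2) = 0 := by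
  intro x hx
  have hs : Real.sqrt x ≠ 0 := ne_of_gt (Real.sqrt_pos.mpr hx)
  have hxx : Real.sqrt x * Real.sqrt x = x := Real.mul_self_sqrt hx.le
  have hω : deriv (fun x => 1 / x - 6 / a ^ 2) x = -1 / x ^ 2 := by
    have h : HasDerivAt (fun y : ℝ => 1 / y - 6 / a ^ 2) (-1 / x ^ 2) x := by
      have h := (hasDerivAt_inv (ne_of_gt hx)).sub_const (6 / a ^ 2)
      simpa [one_div, div_eq_mul_inv, neg_div] using h
    exact h.deriv
  rw [deriv1_eq a hx, deriv2_eq a hx, hω]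
  have ha0 : a ≠ 0 := ne_of_gt ha
  set s := Real.sqrt x with hsdef
  have hx2 : x = s ^ 2 := by rw [sq, hxx]
  have hx0 : x ≠ 0 := ne_of_gt hx
  rw [hx2] at hx0 ⊢
  constructor <;> (field_simp; ring)
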